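/- Let D ⊂ ℝⁿ be a Lebesgue measurable set with 0 < ℒⁿ(D) < ∞, and let F, G : D → [0, ∞] be measurable functions. Let Θ > 0, 0 < q < Θ, 0 < s < ∞, γ > 0, C₁ > 0 and K ≥ 0 be constants, and assume ‖F‖_{L^{q,s}(D)} < ∞. Suppose that for every ε ∈ (0,1) and every λ > ε^{-1/γ}·K the good-λ inequality ℒⁿ({x ∈ D : F(x) > ε^{-1/Θ}·λ}) ≤ C₁·ε·ℒⁿ({x ∈ D : F(x) > λ}) + ℒⁿ({x ∈ D : G(x) > ε^{1/γ}·λ}) holds. Then there exists a constant C depending only on n, q, s, Θ, γ, C₁ such that ‖F‖_{L^{q,s}(D)} ≤ C·( K·ℒⁿ(D)^{1/q} + ‖G‖_{L^{q,s}(D)} ). -/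

import Mathlib

open MeasureTheory Set
open scoped ENNReal

lemma sub_lemma {c : ℝ} (hc : 0 < c) (f : ℝ → ℝ≥0∞) :
    ∫⁻ t in Ioi (0:ℝ), f t = ENNReal.ofReal c * ∫⁻ t in Ioi (0:ℝ), f (c * t) := by
  have hme : MeasurableEmbedding (fun t : ℝ => c * t) :=
    (Homeomorph.mulLeft₀ c hc.ne').measurableEmbedding
  have hmap : Measure.map (fun t : ℝ => c * t) (volume.restrict (Ioi (0:ℝ)))
      = (ENNReal.ofReal c⁻¹) • (volume.restrict (Ioi (0:ℝ))) := by
    have hpre : (fun t : ℝ => c * t) ⁻¹' (Ioi 0) = Ioi 0 := by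
      ext x; simp [mul_pos_iff, hc, hc.not_gt, hc.le]
    have h2 := Measure.restrict_map (μ := (volume : Measure ℝ))
      (measurable_const_mul c) (measurableSet_Ioi (a := (0:ℝ)))
    rw [hpre] at h2
    rw [← h2, Real.map_volume_mul_left hc.ne', abs_of_nonneg (inv_nonneg.2 hc.le),
      Measure.restrict_smul]
  calc ∫⁻ t in Ioi (0:ℝ), f t
      = ENNReal.ofReal c * (ENNReal.ofReal c⁻¹ * ∫⁻ t in Ioi (0:ℝ), f t) := by
        rw [← mul_assoc, ← ENNReal.ofReal_mul hc.le, mul_inv_cancel₀ hc.ne',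
          ENNReal.ofReal_one, one_mul]
    _ = ENNReal.ofReal c * ∫⁻ t in Ioi (0:ℝ), f (c * t) := by
        rw [← smul_eq_mul (ENNReal.ofReal c⁻¹), ← lintegral_smul_measure, ← hmap, hme.lintegral_map]
lemma add_rpow_le' {a b : ℝ≥0∞} {p : ℝ} (hp : 0 ≤ p) :
    (a + b) ^ p ≤ 2 ^ p * (a ^ p + b ^ p) := by
  calc (a + b) ^ p ≤ (2 * (a ⊔ b)) ^ p := by
        gcongr
        rw [two_mul]
        exact add_le_add le_sup_left le_sup_right
    _ = 2 ^ p * (a ⊔ b) ^ p := ENNReal.mul_rpow_of_nonneg _ _ hp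
    _ ≤ 2 ^ p * (a ^ p + b ^ p) := by
        gcongr
        rcases le_total a b with h | h
        · rw [sup_eq_right.2 h]; exact le_add_self
        · rw [sup_eq_left.2 h]; exact le_add_right le_rfl

lemma ioc_rpow_integral {b s : ℝ} (hb : 0 ≤ b) (hs : 0 < s) :
    ∫⁻ t in Ioc (0:ℝ) b, ENNReal.ofReal (t ^ (s - 1)) = ENNReal.ofReal (b ^ s / s) := by
  rcases eq_or_lt_of_le hb with rfl | hb
  · simp [Real.zero_rpow hs.ne']
  · have hint : IntegrableOn (fun t : ℝ => t ^ (s - 1)) (Ioc 0 b) volume :=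
      (intervalIntegral.intervalIntegrable_rpow' (by linarith : (-1:ℝ) < s - 1)).1
    rw [← ofReal_integral_eq_lintegral_ofReal hint
        ((ae_restrict_iff' measurableSet_Ioc).2 (ae_of_all _ fun t ht =>
          Real.rpow_nonneg ht.1.le _))]
    congr 1
    rw [← intervalIntegral.integral_of_le hb.le,
      integral_rpow (Or.inl (by linarith : (-1:ℝ) < s - 1))]
    rw [sub_add_cancel, Real.zero_rpow hs.ne', sub_zero]

lemma weight_scale {c : ℝ} (hc : 0 < c) (s : ℝ) (g : ℝ → ℝ≥0∞) :
    ∫⁻ t in Ioi (0:ℝ), ENNReal.ofReal (t ^ (s - 1)) * g t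
      = ENNReal.ofReal (c ^ s) *
        ∫⁻ t in Ioi (0:ℝ), ENNReal.ofReal (t ^ (s - 1)) * g (c * t) := by
  rw [sub_lemma hc (fun t => ENNReal.ofReal (t ^ (s - 1)) * g t)]
  rw [setLIntegral_congr_fun measurableSet_Ioi (fun t ht => by
      have h1 : (c * t) ^ (s - 1) = c ^ (s - 1) * t ^ (s - 1) :=
        Real.mul_rpow hc.le (le_of_lt ht)
      rw [h1, ENNReal.ofReal_mul (Real.rpow_nonneg hc.le _), mul_assoc])]
  rw [lintegral_const_mul' _ _ ENNReal.ofReal_ne_top, ← mul_assoc,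
    ← ENNReal.ofReal_mul hc.le]
  congr 2
  rw [show s = 1 + (s - 1) by ring, Real.rpow_add hc, Real.rpow_one]
  ring_nf

lemma eps_choice {q s Θ C₁ : ℝ} (hΘ : 0 < Θ) (hq : 0 < q) (hqΘ : q < Θ)
    (hs : 0 < s) (hC₁ : 0 < C₁) :
    ∃ ε : ℝ, 0 < ε ∧ ε < 1 ∧
      (ε ^ (-1 / Θ)) ^ s * (2 ^ (s / q) * (C₁ * ε) ^ (s / q)) ≤ 1 / 2 := by
  set a : ℝ := s / q - s / Θ with ha_def
  have ha : 0 < a := by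
    have h0 : s / Θ < s / q := div_lt_div_of_pos_left hs hq hqΘ
    rw [ha_def]
    linarith
  set B : ℝ := 2 ^ (s / q) * C₁ ^ (s / q) with hB_def
  have hB : 0 < B := mul_pos (Real.rpow_pos_of_pos two_pos _) (Real.rpow_pos_of_pos hC₁ _)
  refine ⟨min (1/2) ((1 / (2 * B)) ^ (1 / a)), lt_min one_half_pos
      (Real.rpow_pos_of_pos (by positivity) _), lt_of_le_of_lt (min_le_left _ _) (by norm_num), ?_⟩
  set ε : ℝ := min (1/2) ((1 / (2 * B)) ^ (1 / a)) with hε_def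
  have hε : 0 < ε := lt_min one_half_pos (Real.rpow_pos_of_pos (by positivity) _)
  have key : (ε ^ (-1 / Θ)) ^ s * (2 ^ (s / q) * (C₁ * ε) ^ (s / q)) = B * ε ^ a := by
    rw [← Real.rpow_mul hε.le, Real.mul_rpow hC₁.le hε.le, ha_def, hB_def,
      sub_eq_add_neg, Real.rpow_add hε, show -1 / Θ * s = -(s / Θ) by ring]
    ring
  rw [key]
  have h1 : ε ^ a ≤ 1 / (2 * B) := by
    calc ε ^ a ≤ ((1 / (2 * B)) ^ (1 / a)) ^ a :=
          Real.rpow_le_rpow hε.le (min_le_right _ _) ha.le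
      _ = 1 / (2 * B) := by
          rw [← Real.rpow_mul (by positivity), one_div a, inv_mul_cancel₀ ha.ne',
            Real.rpow_one]
  calc B * ε ^ a ≤ B * (1 / (2 * B)) := by
        exact mul_le_mul_of_nonneg_left h1 hB.le
    _ = 1 / 2 := by field_simp

noncomputable def paperLorentzNorm {n : ℕ} (q s : ℝ)
    (D : Set (EuclideanSpace ℝ (Fin n))) (g : EuclideanSpace ℝ (Fin n) → ℝ≥0∞) :
    ℝ≥0∞ :=
  (ENNReal.ofReal q *
      ∫⁻ t in Ioi (0 : ℝ),
        ENNReal.ofReal (t ^ (s - 1)) *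
          (volume {x ∈ D | ENNReal.ofReal t < g x}) ^ (s / q)) ^ (1 / s)

set_option maxHeartbeats 1000000 in
theorem stmt3 (n : ℕ) (q s Θ γ C₁ : ℝ) (hΘ : 0 < Θ) (hq : 0 < q) (hqΘ : q < Θ)
    (hs : 0 < s) (hγ : 0 < γ) (hC₁ : 0 < C₁) :
    ∃ C : ℝ, 0 < C ∧
      ∀ (D : Set (EuclideanSpace ℝ (Fin n)))
        (F G : EuclideanSpace ℝ (Fin n) → ℝ≥0∞) (K : ℝ),
        MeasurableSet D → 0 < volume D → volume D < ⊤ →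
        Measurable F → Measurable G → 0 ≤ K →
        paperLorentzNorm q s D F < ⊤ →
        (∀ ε : ℝ, 0 < ε → ε < 1 → ∀ l : ℝ, ε ^ (-1 / γ) * K < l →
          volume {x ∈ D | ENNReal.ofReal (ε ^ (-1 / Θ) * l) < F x} ≤
            ENNReal.ofReal (C₁ * ε) * volume {x ∈ D | ENNReal.ofReal l < F x} +
              volume {x ∈ D | ENNReal.ofReal (ε ^ (1 / γ) * l) < G x}) →
        paperLorentzNorm q s D F ≤
          ENNReal.ofReal C *
            (ENNReal.ofReal K * (volume D) ^ (1 / q) + paperLorentzNorm q s D G) := by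
  obtain ⟨ε, hε0, hε1, hεkey⟩ := eps_choice hΘ hq hqΘ hs hC₁
  set c : ℝ := ε ^ (-1 / Θ) with hc_def
  set d : ℝ := ε ^ (1 / γ) with hd_def
  set e : ℝ := ε ^ (-1 / γ) with he_def
  have hc : 0 < c := Real.rpow_pos_of_pos hε0 _
  have hd : 0 < d := Real.rpow_pos_of_pos hε0 _
  have he : 0 < e := Real.rpow_pos_of_pos hε0 _
  set r1 : ℝ := (2 * q * (c ^ s * (e ^ s / s))) ^ (1 / s) with hr1_def
  set r2 : ℝ := (2 * (c ^ s * (2 ^ (s / q) * d ^ (-s)))) ^ (1 / s) with hr2_def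
  have hr1pos : 0 < r1 := Real.rpow_pos_of_pos (by positivity) _
  have hr2pos : 0 < r2 := Real.rpow_pos_of_pos (by positivity) _
  refine ⟨2 ^ (1 / s) * max r1 r2, by positivity, ?_⟩
  intro D F G K hD hD0 hDtop hF hG hK hFfin hgood
  set w : ℝ → ℝ≥0∞ := fun t => ENNReal.ofReal (t ^ (s - 1)) with hw_def
  set A : ℝ → ℝ≥0∞ := fun t => volume {x ∈ D | ENNReal.ofReal t < F x} with hA_def
  set B : ℝ → ℝ≥0∞ := fun t => volume {x ∈ D | ENNReal.ofReal t < G x} with hB_def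
  have hAanti : Antitone A := fun t t' htt' =>
    measure_mono fun x hx => ⟨hx.1, lt_of_le_of_lt (ENNReal.ofReal_le_ofReal htt') hx.2⟩
  have hAm : Measurable A := hAanti.measurable
  have hwm : Measurable w := by measurability
  set IF : ℝ≥0∞ := ∫⁻ t in Ioi (0:ℝ), w t * A t ^ (s / q) with hIF_def
  set IG : ℝ≥0∞ := ∫⁻ t in Ioi (0:ℝ), w t * B t ^ (s / q) with hIG_def
  have hPF : paperLorentzNorm q s D F = (ENNReal.ofReal q * IF) ^ (1 / s) := rfl
  have hPG : paperLorentzNorm q s D G = (ENNReal.ofReal q * IG) ^ (1 / s) := rfl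
  -- finiteness of IF
  have hIF_ne : IF ≠ ⊤ := by
    intro h
    rw [hPF, h, ENNReal.mul_top (by simpa using (ENNReal.ofReal_pos.2 hq).ne'),
      ENNReal.top_rpow_of_pos (by positivity)] at hFfin
    exact hFfin.ne rfl
  -- change of variables
  set J : ℝ≥0∞ := ∫⁻ t in Ioi (0:ℝ), w t * A (c * t) ^ (s / q) with hJ_def
  set JG : ℝ≥0∞ := ∫⁻ t in Ioi (0:ℝ), w t * B (d * t) ^ (s / q) with hJG_def
  have hIF_eq : IF = ENNReal.ofReal (c ^ s) * J :=
    weight_scale hc s (fun t => A t ^ (s / q))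
  have hIG_eq : IG = ENNReal.ofReal (d ^ s) * JG :=
    weight_scale hd s (fun t => B t ^ (s / q))
  have hJG_eq : JG = ENNReal.ofReal (d ^ (-s)) * IG := by
    rw [hIG_eq, ← mul_assoc, ← ENNReal.ofReal_mul (Real.rpow_nonneg hd.le _),
      ← Real.rpow_add hd, neg_add_cancel, Real.rpow_zero, ENNReal.ofReal_one, one_mul]
  set l₀ : ℝ := e * K with hl₀_def
  have hl₀ : 0 ≤ l₀ := mul_nonneg he.le hK
  -- split
  have hsplit : J ≤ (∫⁻ t in Ioc (0:ℝ) l₀, w t * A (c * t) ^ (s / q)) +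
      ∫⁻ t in Ioi l₀, w t * A (c * t) ^ (s / q) := by
    refine le_trans (lintegral_mono_set ?_) (lintegral_union_le _ _ _)
    intro t ht
    rcases le_or_gt t l₀ with h | h
    · exact Or.inl ⟨ht, h⟩
    · exact Or.inr h
  have hDsq_ne : (volume D) ^ (s / q) ≠ ⊤ :=
    (ENNReal.rpow_lt_top_of_nonneg (by positivity) hDtop.ne).ne
  have hJ1 : (∫⁻ t in Ioc (0:ℝ) l₀, w t * A (c * t) ^ (s / q)) ≤
      ENNReal.ofReal (l₀ ^ s / s) * (volume D) ^ (s / q) := by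
    calc (∫⁻ t in Ioc (0:ℝ) l₀, w t * A (c * t) ^ (s / q))
        ≤ ∫⁻ t in Ioc (0:ℝ) l₀, (volume D) ^ (s / q) * w t := by
          refine lintegral_mono fun t => ?_
          rw [mul_comm]
          gcongr
          exact measure_mono fun x hx => hx.1
      _ = (volume D) ^ (s / q) * ∫⁻ t in Ioc (0:ℝ) l₀, w t :=
          lintegral_const_mul' _ _ hDsq_ne
      _ = ENNReal.ofReal (l₀ ^ s / s) * (volume D) ^ (s / q) := by
          rw [hw_def, ioc_rpow_integral hl₀ hs, mul_comm]
  -- pointwise good-lambda bound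
  have hofr2 : ((2:ℝ≥0∞) ^ (s / q)) = ENNReal.ofReal (2 ^ (s / q)) := by
    rw [← ENNReal.ofReal_rpow_of_pos two_pos, ENNReal.ofReal_ofNat]
  have hpt : ∀ t ∈ Ioi l₀, w t * A (c * t) ^ (s / q) ≤
      ENNReal.ofReal (2 ^ (s / q) * (C₁ * ε) ^ (s / q)) * (w t * A t ^ (s / q)) +
        ENNReal.ofReal (2 ^ (s / q)) * (w t * B (d * t) ^ (s / q)) := by
    intro t ht
    have h1 : A (c * t) ≤ ENNReal.ofReal (C₁ * ε) * A t + B (d * t) :=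
      hgood ε hε0 hε1 t ht
    have h2 : A (c * t) ^ (s / q) ≤
        ENNReal.ofReal (2 ^ (s / q)) * (ENNReal.ofReal ((C₁ * ε) ^ (s / q)) * A t ^ (s / q)
          + B (d * t) ^ (s / q)) := by
      calc A (c * t) ^ (s / q)
          ≤ (ENNReal.ofReal (C₁ * ε) * A t + B (d * t)) ^ (s / q) :=
            ENNReal.rpow_le_rpow h1 (by positivity)
        _ ≤ 2 ^ (s / q) * ((ENNReal.ofReal (C₁ * ε) * A t) ^ (s / q)
              + B (d * t) ^ (s / q)) := add_rpow_le' (by positivity)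
        _ = _ := by
            rw [ENNReal.mul_rpow_of_nonneg _ _ (by positivity : (0:ℝ) ≤ s / q), hofr2,
              ENNReal.ofReal_rpow_of_pos (by positivity)]
    calc w t * A (c * t) ^ (s / q)
        ≤ w t * (ENNReal.ofReal (2 ^ (s / q)) * (ENNReal.ofReal ((C₁ * ε) ^ (s / q)) *
            A t ^ (s / q) + B (d * t) ^ (s / q))) := mul_le_mul_right h2 _
      _ = _ := by
          rw [ENNReal.ofReal_mul (by positivity)]
          ring
  have hJ2 : (∫⁻ t in Ioi l₀, w t * A (c * t) ^ (s / q)) ≤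
      ENNReal.ofReal (2 ^ (s / q) * (C₁ * ε) ^ (s / q)) * IF +
        ENNReal.ofReal (2 ^ (s / q)) * JG := by
    have hrpowm : Measurable fun x : ℝ≥0∞ => x ^ (s / q) :=
      Monotone.measurable fun x y hxy => ENNReal.rpow_le_rpow hxy (by positivity)
    have hm1 : Measurable fun t => ENNReal.ofReal (2 ^ (s / q) * (C₁ * ε) ^ (s / q)) *
        (w t * A t ^ (s / q)) := (hwm.mul (hrpowm.comp hAm)).const_mul _
    calc (∫⁻ t in Ioi l₀, w t * A (c * t) ^ (s / q))
        ≤ ∫⁻ t in Ioi l₀,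
            (ENNReal.ofReal (2 ^ (s / q) * (C₁ * ε) ^ (s / q)) * (w t * A t ^ (s / q)) +
              ENNReal.ofReal (2 ^ (s / q)) * (w t * B (d * t) ^ (s / q))) :=
          setLIntegral_mono' measurableSet_Ioi hpt
      _ = (∫⁻ t in Ioi l₀, ENNReal.ofReal (2 ^ (s / q) * (C₁ * ε) ^ (s / q)) *
            (w t * A t ^ (s / q))) +
            ∫⁻ t in Ioi l₀, ENNReal.ofReal (2 ^ (s / q)) * (w t * B (d * t) ^ (s / q)) :=
          lintegral_add_left hm1 _
      _ ≤ (∫⁻ t in Ioi (0:ℝ), ENNReal.ofReal (2 ^ (s / q) * (C₁ * ε) ^ (s / q)) *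
            (w t * A t ^ (s / q))) +
            ∫⁻ t in Ioi (0:ℝ), ENNReal.ofReal (2 ^ (s / q)) * (w t * B (d * t) ^ (s / q)) := by
          gcongr <;> exact lintegral_mono_set (fun x hx => lt_of_le_of_lt hl₀ hx)
      _ = _ := by
          rw [lintegral_const_mul' _ _ ENNReal.ofReal_ne_top,
            lintegral_const_mul' _ _ ENNReal.ofReal_ne_top]
  -- combine
  have hhalf : ENNReal.ofReal (c ^ s) * ENNReal.ofReal (2 ^ (s / q) * (C₁ * ε) ^ (s / q)) ≤
      ENNReal.ofReal (1 / 2) := by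
    rw [← ENNReal.ofReal_mul (by positivity)]
    exact ENNReal.ofReal_le_ofReal hεkey
  set PU : ℝ≥0∞ := ENNReal.ofReal (c ^ s) * ENNReal.ofReal (l₀ ^ s / s) *
    (volume D) ^ (s / q) with hPU_def
  set PG : ℝ≥0∞ := ENNReal.ofReal (c ^ s) * (ENNReal.ofReal (2 ^ (s / q)) *
    ENNReal.ofReal (d ^ (-s))) with hPG_def
  have hmain : IF ≤ PU + PG * IG + ENNReal.ofReal (1 / 2) * IF := by
    calc IF = ENNReal.ofReal (c ^ s) * J := hIF_eq
      _ ≤ ENNReal.ofReal (c ^ s) * (ENNReal.ofReal (l₀ ^ s / s) * (volume D) ^ (s / q) +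
            (ENNReal.ofReal (2 ^ (s / q) * (C₁ * ε) ^ (s / q)) * IF +
              ENNReal.ofReal (2 ^ (s / q)) * JG)) := by
          gcongr
          exact hsplit.trans (add_le_add hJ1 hJ2)
      _ = PU + (ENNReal.ofReal (c ^ s) * ENNReal.ofReal (2 ^ (s / q) * (C₁ * ε) ^ (s / q))) * IF
            + PG * IG := by
          rw [hJG_eq, hPU_def, hPG_def]
          ring
      _ ≤ PU + PG * IG + ENNReal.ofReal (1 / 2) * IF := by
          rw [add_right_comm]
          gcongr
  have hhalf2 : ENNReal.ofReal (1 / 2) = 1 / 2 := by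
    rw [ENNReal.ofReal_div_of_pos two_pos, ENNReal.ofReal_one, ENNReal.ofReal_ofNat]
  have habs : IF ≤ 2 * (PU + PG * IG) := by
    have h1 : IF - IF / 2 ≤ PU + PG * IG := by
      rw [tsub_le_iff_right]
      calc IF ≤ PU + PG * IG + ENNReal.ofReal (1 / 2) * IF := hmain
        _ = PU + PG * IG + IF / 2 := by
            rw [hhalf2, one_div, ENNReal.div_eq_inv_mul]
    rw [ENNReal.sub_half hIF_ne] at h1
    calc IF = 2 * (IF / 2) := (ENNReal.mul_div_cancel two_ne_zero ENNReal.ofNat_ne_top).symm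
      _ ≤ 2 * (PU + PG * IG) := by gcongr
  -- final computation
  have hexp : s / q * (1 / s) = 1 / q := by
    field_simp
  have hKs : (K ^ s) ^ (1 / s) = K := by
    rw [← Real.rpow_mul hK, mul_one_div, div_self hs.ne', Real.rpow_one]
  have hbase : (q * 2 * (c ^ s * (l₀ ^ s / s))) ^ (1 / s) = r1 * K := by
    rw [hl₀_def, Real.mul_rpow he.le hK,
      show q * 2 * (c ^ s * (e ^ s * K ^ s / s)) = 2 * q * (c ^ s * (e ^ s / s)) * K ^ s by ring,
      Real.mul_rpow (by positivity) (Real.rpow_nonneg hK s), hr1_def, hKs]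
  have h2q : ENNReal.ofReal (q * 2 * (c ^ s * (l₀ ^ s / s))) =
      ENNReal.ofReal q * 2 * (ENNReal.ofReal (c ^ s) * ENNReal.ofReal (l₀ ^ s / s)) := by
    rw [ENNReal.ofReal_mul (by positivity : (0:ℝ) ≤ q * 2),
      ENNReal.ofReal_mul (by positivity : (0:ℝ) ≤ q),
      ENNReal.ofReal_mul (by positivity : (0:ℝ) ≤ c ^ s), ENNReal.ofReal_ofNat]
  have hU : (ENNReal.ofReal q * (2 * PU)) ^ (1 / s) =
      ENNReal.ofReal r1 * ENNReal.ofReal K * (volume D) ^ (1 / q) := by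
    rw [show ENNReal.ofReal q * (2 * PU) =
        ENNReal.ofReal (q * 2 * (c ^ s * (l₀ ^ s / s))) * (volume D) ^ (s / q) by
      rw [hPU_def, h2q]
      ring]
    rw [ENNReal.mul_rpow_of_nonneg _ _ (by positivity : (0:ℝ) ≤ 1 / s),
      ENNReal.ofReal_rpow_of_nonneg (by positivity) (by positivity), hbase,
      ← ENNReal.rpow_mul, hexp, ENNReal.ofReal_mul hr1pos.le]
  have hV : (ENNReal.ofReal q * (2 * (PG * IG))) ^ (1 / s) =
      ENNReal.ofReal r2 * paperLorentzNorm q s D G := by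
    have h2v : ENNReal.ofReal (2 * (c ^ s * (2 ^ (s / q) * d ^ (-s)))) =
        2 * (ENNReal.ofReal (c ^ s) * (ENNReal.ofReal (2 ^ (s / q)) *
          ENNReal.ofReal (d ^ (-s)))) := by
      rw [ENNReal.ofReal_mul (by positivity : (0:ℝ) ≤ 2),
        ENNReal.ofReal_mul (by positivity : (0:ℝ) ≤ c ^ s),
        ENNReal.ofReal_mul (by positivity : (0:ℝ) ≤ (2:ℝ) ^ (s / q)), ENNReal.ofReal_ofNat]
    rw [show ENNReal.ofReal q * (2 * (PG * IG)) =
        ENNReal.ofReal (2 * (c ^ s * (2 ^ (s / q) * d ^ (-s)))) * (ENNReal.ofReal q * IG) by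
      rw [hPG_def, h2v]
      ring]
    rw [ENNReal.mul_rpow_of_nonneg _ _ (by positivity : (0:ℝ) ≤ 1 / s),
      ENNReal.ofReal_rpow_of_nonneg (by positivity) (by positivity), ← hr2_def, hPG]
  have hof2s : ((2:ℝ≥0∞)) ^ (1 / s) = ENNReal.ofReal (2 ^ (1 / s)) := by
    rw [← ENNReal.ofReal_rpow_of_pos two_pos, ENNReal.ofReal_ofNat]
  calc paperLorentzNorm q s D F = (ENNReal.ofReal q * IF) ^ (1 / s) := hPF
    _ ≤ (ENNReal.ofReal q * (2 * (PU + PG * IG))) ^ (1 / s) := by gcongr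
    _ = (ENNReal.ofReal q * (2 * PU) + ENNReal.ofReal q * (2 * (PG * IG))) ^ (1 / s) := by
        congr 1
        ring
    _ ≤ 2 ^ (1 / s) * ((ENNReal.ofReal q * (2 * PU)) ^ (1 / s) +
          (ENNReal.ofReal q * (2 * (PG * IG))) ^ (1 / s)) := add_rpow_le' (by positivity)
    _ = 2 ^ (1 / s) * (ENNReal.ofReal r1 * ENNReal.ofReal K * (volume D) ^ (1 / q) +
          ENNReal.ofReal r2 * paperLorentzNorm q s D G) := by rw [hU, hV]
    _ ≤ ENNReal.ofReal (2 ^ (1 / s)) * (ENNReal.ofReal (max r1 r2) *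
          (ENNReal.ofReal K * (volume D) ^ (1 / q)) +
          ENNReal.ofReal (max r1 r2) * paperLorentzNorm q s D G) := by
        rw [hof2s, mul_assoc (ENNReal.ofReal r1)]
        gcongr
        · exact le_max_left _ _
        · exact le_max_right _ _
    _ = ENNReal.ofReal (2 ^ (1 / s) * max r1 r2) *
          (ENNReal.ofReal K * (volume D) ^ (1 / q) + paperLorentzNorm q s D G) := by
        rw [← mul_add, ENNReal.ofReal_mul (by positivity), mul_assoc]
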